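/- For each even integer p ≥ 2, define β_p > 0 by β_p² = inf_{0<u<1} (1+u^{−p})·I(u), where I(u) = ((1+u)ln(1+u)+(1−u)ln(1−u))/2. Then lim_{p→∞} β_p² = 2 ln 2, i.e., β_p → β_c = √(2 ln 2). -/

import Mathlib

open Filter

/-- `I(u) = ((1+u)·ln(1+u) + (1−u)·ln(1−u))/2`. -/
noncomputable def entI (u : ℝ) : ℝ :=
  ((1 + u) * Real.log (1 + u) + (1 - u) * Real.log (1 - u)) / 2

/-- `β_p² = inf_{0<u<1} (1+u^{−p})·I(u)`. -/
noncomputable def betaPsq (p : ℕ) : ℝ :=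
  sInf ((fun u : ℝ => (1 + (u ^ p)⁻¹) * entI u) '' Set.Ioo 0 1)

lemma entI_continuous : Continuous entI := by
  have h : Continuous fun x : ℝ => x * Real.log x := Real.continuous_mul_log
  have h1 : Continuous fun u : ℝ => (1 + u) * Real.log (1 + u) :=
    h.comp (continuous_const.add continuous_id)
  have h2 : Continuous fun u : ℝ => (1 - u) * Real.log (1 - u) :=
    h.comp (continuous_const.sub continuous_id)
  exact (h1.add h2).div_const 2

lemma entI_zero : entI 0 = 0 := by simp [entI]

lemma entI_one : entI 1 = Real.log 2 := by
  norm_num [entI]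

lemma entI_hasDerivAt {u : ℝ} (h1 : 0 < 1 + u) (h2 : 0 < 1 - u) :
    HasDerivAt entI ((Real.log (1 + u) - Real.log (1 - u)) / 2) u := by
  have ha : HasDerivAt (fun u : ℝ => (1 + u) * Real.log (1 + u))
      (Real.log (1 + u) + 1) u := by
    have := (Real.hasDerivAt_mul_log h1.ne').comp u ((hasDerivAt_id u).const_add 1)
    simpa [Function.comp_def] using this
  have hb : HasDerivAt (fun u : ℝ => (1 - u) * Real.log (1 - u))
      (-(Real.log (1 - u) + 1)) u := by
    have := (Real.hasDerivAt_mul_log h2.ne').comp u ((hasDerivAt_id u).const_sub 1)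
    simpa [Function.comp_def] using this
  have h := (ha.add hb).div_const 2
  convert h using 1
  · rfl
  · rfl
  · rfl
  · ring

lemma entI_mono : MonotoneOn entI (Set.Icc 0 1) := by
  apply monotoneOn_of_deriv_nonneg (convex_Icc 0 1) entI_continuous.continuousOn
  · intro x hx
    rw [interior_Icc] at hx
    exact (entI_hasDerivAt (by linarith [hx.1]) (by linarith [hx.2])).differentiableAt.differentiableWithinAt
  · intro x hx
    rw [interior_Icc] at hx
    rw [(entI_hasDerivAt (by linarith [hx.1]) (by linarith [hx.2])).deriv]
    have hlog : Real.log (1 - x) ≤ Real.log (1 + x) :=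
      Real.log_le_log (by linarith [hx.2]) (by linarith [hx.1])
    linarith

lemma entI_nonneg {u : ℝ} (h : u ∈ Set.Icc (0:ℝ) 1) : 0 ≤ entI u := by
  have := entI_mono (Set.left_mem_Icc.mpr (by norm_num)) h h.1
  rwa [entI_zero] at this

lemma entI_le_log2 {u : ℝ} (h : u ∈ Set.Icc (0:ℝ) 1) : entI u ≤ Real.log 2 := by
  have := entI_mono h (Set.right_mem_Icc.mpr (by norm_num)) h.2
  rwa [entI_one] at this

lemma entI_quad {u : ℝ} (h0 : 0 < u) (h3 : u ≤ 1/3) : u^2/6 ≤ entI u := by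
  have hu1 : 0 < 1 - u := by linarith
  have hu2 : 0 < 1 + u := by linarith
  have hq : 0 < 1 - u^2 := by nlinarith
  have key1 : Real.log ((1 - u^2)⁻¹) ≤ (1 - u^2)⁻¹ - 1 :=
    Real.log_le_sub_one_of_pos (by positivity)
  have key2 : Real.log ((1-u)/(1+u)) ≤ (1-u)/(1+u) - 1 :=
    Real.log_le_sub_one_of_pos (by positivity)
  rw [Real.log_inv] at key1
  rw [Real.log_div hu1.ne' hu2.ne'] at key2
  have hlog : Real.log (1 - u^2) = Real.log (1-u) + Real.log (1+u) := by
    rw [← Real.log_mul hu1.ne' hu2.ne']; ring_nf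
  rw [hlog] at key1
  unfold entI
  set a := Real.log (1 + u) with ha
  set b := Real.log (1 - u) with hb
  -- key1 : -(b + a) ≤ (1-u^2)⁻¹ - 1,  key2 : b - a ≤ (1-u)/(1+u) - 1
  have e1 : (1 - u^2)⁻¹ - 1 = u^2 / (1 - u^2) := by field_simp; ring
  have e2 : (1-u)/(1+u) - 1 = -(2*u)/(1+u) := by field_simp; ring
  rw [e1] at key1
  rw [e2] at key2
  have k1 : -(u^2) ≤ (b + a) * (1 - u^2) := by
    nlinarith [(le_div_iff₀ hq).mp key1]
  have k2 : (b - a) * (1 + u) ≤ -(2*u) := by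
    have := (le_div_iff₀ hu2).mp key2
    linarith
  have h5 : 2*u^2*(1-u) ≤ (a - b) * u * (1+u) * (1-u) := by
    have hk : 2*u ≤ (a - b) * (1 + u) := by nlinarith [k2]
    have := mul_le_mul_of_nonneg_right hk h0.le
    nlinarith [mul_le_mul_of_nonneg_right this hu1.le]
  have hG : 0 ≤ ((a + b) + u * (a - b) - u^2/3) * (1 - u^2) := by
    nlinarith [k1, h5, sq_nonneg u, mul_pos h0 h0]
  have hG2 : 0 ≤ (a + b) + u * (a - b) - u^2/3 := by
    by_contra hcon
    push_neg at hcon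
    nlinarith [hG, hq]
  nlinarith [hG2]

lemma betaPsq_le (p : ℕ) : betaPsq p ≤ 2 * Real.log 2 := by
  have hne : (1:ℝ) ∈ closure (Set.Ioo (0:ℝ) 1) := by
    rw [closure_Ioo (by norm_num : (0:ℝ) ≠ 1)]
    exact ⟨by norm_num, le_refl 1⟩
  have hnb : (nhdsWithin (1:ℝ) (Set.Ioo 0 1)).NeBot :=
    mem_closure_iff_nhdsWithin_neBot.mp hne
  have hbdd : BddBelow ((fun u : ℝ => (1 + (u ^ p)⁻¹) * entI u) '' Set.Ioo 0 1) := by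
    refine ⟨0, ?_⟩
    rintro x ⟨u, hu, rfl⟩
    have h1 : 0 ≤ entI u := entI_nonneg ⟨hu.1.le, hu.2.le⟩
    have h2 : 0 ≤ (u ^ p)⁻¹ := inv_nonneg.mpr (pow_nonneg hu.1.le p)
    have : (0:ℝ) ≤ 1 + (u ^ p)⁻¹ := by linarith
    exact mul_nonneg this h1
  refine le_of_forall_pos_le_add ?_
  intro ε hε
  have hc : ContinuousAt (fun u : ℝ => (1 + (u ^ p)⁻¹) * entI u) 1 := by
    have hp : ContinuousAt (fun u : ℝ => u ^ p) 1 := (continuous_pow p).continuousAt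
    exact (continuousAt_const.add (hp.inv₀ (by norm_num))).mul entI_continuous.continuousAt
  have hval : (1 + ((1:ℝ) ^ p)⁻¹) * entI 1 = 2 * Real.log 2 := by
    rw [one_pow, inv_one, entI_one]; ring
  have ht : Tendsto (fun u : ℝ => (1 + (u ^ p)⁻¹) * entI u)
      (nhdsWithin 1 (Set.Ioo 0 1)) (nhds (2 * Real.log 2)) := by
    rw [← hval]
    exact hc.tendsto.mono_left nhdsWithin_le_nhds
  have hev : ∀ᶠ u in nhdsWithin (1:ℝ) (Set.Ioo 0 1),
      (1 + (u ^ p)⁻¹) * entI u < 2 * Real.log 2 + ε :=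
    ht.eventually_lt_const (by linarith)
  obtain ⟨u, hlt, hmem⟩ := (hev.and eventually_mem_nhdsWithin).exists
  calc betaPsq p ≤ (1 + (u ^ p)⁻¹) * entI u := csInf_le hbdd ⟨u, hmem, rfl⟩
  _ ≤ 2 * Real.log 2 + ε := hlt.le

lemma betaPsq_ge {p : ℕ} (hp : 2 ≤ p) {u₀ : ℝ} (h₀ : 1/3 ≤ u₀) (h₁ : u₀ < 1)
    (hA : 12 * Real.log 2 ≤ (3:ℝ) ^ (p - 2))
    (hB : 2 * Real.log 2 ≤ (u₀ ^ p)⁻¹ * entI (1/3)) :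
    2 * entI u₀ ≤ betaPsq p := by
  have hne : ((fun u : ℝ => (1 + (u ^ p)⁻¹) * entI u) '' Set.Ioo 0 1).Nonempty :=
    ⟨_, Set.mem_image_of_mem _ (show (1/2:ℝ) ∈ Set.Ioo 0 1 by constructor <;> norm_num)⟩
  apply le_csInf hne
  rintro x ⟨u, hu, rfl⟩
  obtain ⟨hu0, hu1⟩ := hu
  have hu₀0 : 0 < u₀ := lt_of_lt_of_le (by norm_num) h₀
  have hle2 : 2 * entI u₀ ≤ 2 * Real.log 2 := by
    have := entI_le_log2 ⟨hu₀0.le, h₁.le⟩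
    linarith
  have hupow : 0 < u ^ p := pow_pos hu0 p
  have hEnonneg : 0 ≤ entI u := entI_nonneg ⟨hu0.le, hu1.le⟩
  rcases le_or_gt u (1/3) with hc1 | hc1
  · -- u ≤ 1/3
    have hq := entI_quad hu0 hc1
    have key : (3:ℝ) ^ (p-2) / 6 ≤ (u ^ p)⁻¹ * entI u := by
      have h1 : (u ^ p)⁻¹ * (u^2/6) ≤ (u ^ p)⁻¹ * entI u :=
        mul_le_mul_of_nonneg_left hq (by positivity)
      have h2 : (u ^ p)⁻¹ * (u^2/6) = (u ^ (p-2))⁻¹ / 6 := by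
        have hpe : u ^ p = u ^ (p-2) * u ^ 2 := by
          rw [← pow_add]; congr 1; omega
        have hpow2 : (0:ℝ) < u ^ (p-2) := pow_pos hu0 _
        rw [hpe]
        field_simp
      have h3 : (3:ℝ) ^ (p-2) ≤ (u ^ (p-2))⁻¹ := by
        have hle : u ^ (p-2) ≤ (1/3:ℝ) ^ (p-2) := pow_le_pow_left₀ hu0.le hc1 _
        have : ((1/3:ℝ) ^ (p-2))⁻¹ ≤ (u ^ (p-2))⁻¹ :=
          inv_anti₀ (pow_pos hu0 _) hle
        calc (3:ℝ)^(p-2) = ((1/3:ℝ)^(p-2))⁻¹ := by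
              rw [one_div, inv_pow, inv_inv]
        _ ≤ (u ^ (p-2))⁻¹ := this
      calc (3:ℝ)^(p-2)/6 ≤ (u^(p-2))⁻¹/6 := by linarith
      _ = (u ^ p)⁻¹ * (u^2/6) := h2.symm
      _ ≤ _ := h1
    have hfinal : (u^p)⁻¹ * entI u ≤ (1 + (u^p)⁻¹) * entI u := by nlinarith
    calc 2 * entI u₀ ≤ 2 * Real.log 2 := hle2
    _ ≤ (3:ℝ)^(p-2)/6 := by linarith
    _ ≤ (u^p)⁻¹ * entI u := key
    _ ≤ (1 + (u^p)⁻¹) * entI u := hfinal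
  · rcases le_or_gt u u₀ with hc2 | hc2
    · -- 1/3 ≤ u ≤ u₀
      have hIu : entI (1/3) ≤ entI u :=
        entI_mono ⟨by norm_num, by norm_num⟩ ⟨hu0.le, hu1.le⟩ hc1.le
      have hinv : (u₀ ^ p)⁻¹ ≤ (u ^ p)⁻¹ :=
        inv_anti₀ hupow (pow_le_pow_left₀ hu0.le hc2 p)
      have hI3 : 0 ≤ entI (1/3) := entI_nonneg ⟨by norm_num, by norm_num⟩
      have hmul : (u₀^p)⁻¹ * entI (1/3) ≤ (u^p)⁻¹ * entI u :=
        mul_le_mul hinv hIu hI3 (by positivity)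
      have hfinal : (u^p)⁻¹ * entI u ≤ (1 + (u^p)⁻¹) * entI u := by nlinarith
      calc 2 * entI u₀ ≤ 2 * Real.log 2 := hle2
      _ ≤ (u₀^p)⁻¹ * entI (1/3) := hB
      _ ≤ (u^p)⁻¹ * entI u := hmul
      _ ≤ (1 + (u^p)⁻¹) * entI u := hfinal
    · -- u₀ ≤ u
      have hIu : entI u₀ ≤ entI u :=
        entI_mono ⟨hu₀0.le, h₁.le⟩ ⟨hu0.le, hu1.le⟩ hc2.le
      have h1 : u ^ p ≤ 1 := pow_le_one₀ hu0.le hu1.le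
      have h2 : (1:ℝ) ≤ (u^p)⁻¹ := (one_le_inv₀ hupow).mpr h1
      nlinarith

/-- As `p → ∞` along even `p ≥ 2`, `β_p² → 2 ln 2`, i.e. `β_p → β_c = √(2 ln 2)`. -/
theorem stmt_11 :
    Tendsto betaPsq (atTop ⊓ Filter.principal {p : ℕ | Even p ∧ 2 ≤ p})
      (nhds (2 * Real.log 2)) := by
  rw [Metric.tendsto_nhds]
  intro ε hε
  obtain ⟨u₀, hu₀mem, hu₀⟩ : ∃ u₀, u₀ ∈ Set.Ioo (1/3:ℝ) 1 ∧ Real.log 2 - ε/4 < entI u₀ := by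
    have hne : (1:ℝ) ∈ closure (Set.Ioo (1/3:ℝ) 1) := by
      rw [closure_Ioo (by norm_num : (1/3:ℝ) ≠ 1)]
      constructor <;> norm_num
    have hnb : (nhdsWithin (1:ℝ) (Set.Ioo (1/3:ℝ) 1)).NeBot :=
      mem_closure_iff_nhdsWithin_neBot.mp hne
    have ht : Tendsto entI (nhdsWithin 1 (Set.Ioo (1/3:ℝ) 1)) (nhds (Real.log 2)) := by
      rw [← entI_one]
      exact entI_continuous.continuousAt.tendsto.mono_left nhdsWithin_le_nhds
    have h1 := ht.eventually_const_lt (show Real.log 2 - ε/4 < Real.log 2 by linarith)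
    obtain ⟨u₀, h, hm⟩ := (h1.and eventually_mem_nhdsWithin).exists
    exact ⟨u₀, hm, h⟩
  have hA : ∀ᶠ p : ℕ in atTop, 12 * Real.log 2 ≤ (3:ℝ)^(p-2) := by
    have h3 : Tendsto (fun k : ℕ => (3:ℝ)^k) atTop atTop :=
      tendsto_pow_atTop_atTop_of_one_lt (by norm_num)
    exact (h3.comp (tendsto_sub_atTop_nat 2)).eventually_ge_atTop _
  have hB : ∀ᶠ p : ℕ in atTop, 2 * Real.log 2 ≤ (u₀ ^ p)⁻¹ * entI (1/3) := by
    have h1 : (1:ℝ) < u₀⁻¹ := (one_lt_inv₀ (by linarith [hu₀mem.1] : (0:ℝ) < u₀)).mpr hu₀mem.2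
    have hI3 : 0 < entI (1/3) := by
      have := entI_quad (show (0:ℝ) < 1/3 by norm_num) (le_refl (1/3:ℝ))
      nlinarith
    have h2 : Tendsto (fun p : ℕ => (u₀⁻¹)^p * entI (1/3)) atTop atTop :=
      (tendsto_pow_atTop_atTop_of_one_lt h1).atTop_mul_const hI3
    have := h2.eventually_ge_atTop (2 * Real.log 2)
    simpa [inv_pow] using this
  have main : ∀ᶠ p : ℕ in atTop, dist (betaPsq p) (2 * Real.log 2) < ε := by
    filter_upwards [hA, hB, eventually_ge_atTop 2] with p hpA hpB hp2
    have hlow := betaPsq_ge hp2 hu₀mem.1.le hu₀mem.2 hpA hpB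
    have hup := betaPsq_le p
    rw [Real.dist_eq, abs_lt]
    constructor <;> linarith
  exact main.filter_mono inf_le_left
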